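/- arXiv:math/0205131 — 3 statements merged into one kernel-verified Lean document; each statement's English description precedes it below -/
import Mathlib

section
/- For any nonempty Young diagram λ, the scalar c_λ = (s − s⁻¹)(α·Σ_{c∈λ} s^{2·cn(c)} − α⁻¹·Σ_{c∈λ} s^{−2·cn(c)}) is a nonzero element of the field ℚ(α, s). -/
open MvPolynomial

noncomputable abbrev F : Type := FractionRing (MvPolynomial (Fin 2) ℚ)

noncomputable def α : F := algebraMap (MvPolynomial (Fin 2) ℚ) F (X 0)
noncomputable def s : F := algebraMap (MvPolynomial (Fin 2) ℚ) F (X 1)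

/-- The scalar `c_λ` associated to a Young diagram `λ`. -/
noncomputable def cLam (lam : YoungDiagram) : F :=
  (s - s⁻¹) * (α * ∑ c ∈ lam.cells, s ^ (2 * ((c.2 : ℤ) - (c.1 : ℤ)))
    - α⁻¹ * ∑ c ∈ lam.cells, s ^ (-(2 * ((c.2 : ℤ) - (c.1 : ℤ)))))

/-- For any nonempty Young diagram `λ`, the scalar `c_λ` is nonzero in `ℚ(α,s)`. -/
theorem cLam_ne_zero (lam : YoungDiagram) (h : lam ≠ ⊥) : cLam lam ≠ 0 := by
  set P := MvPolynomial (Fin 2) ℚ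
  have hι : Function.Injective (algebraMap P F) := IsFractionRing.injective _ _
  have hs : s ≠ 0 := fun hz => X_ne_zero (R := ℚ) (1 : Fin 2) (hι (by rw [map_zero]; exact hz))
  have hα : α ≠ 0 := fun hz => X_ne_zero (R := ℚ) (0 : Fin 2) (hι (by rw [map_zero]; exact hz))
  -- nonempty cells
  have hne : lam.cells.Nonempty := by
    rw [Finset.nonempty_iff_ne_empty]
    intro hc
    apply h
    ext x
    simp only [← YoungDiagram.mem_cells, hc, YoungDiagram.cells_bot]
  set M : ℕ := 2 * lam.cells.sup (fun c => max c.1 c.2) with hM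
  have hbound : ∀ c ∈ lam.cells, 0 ≤ 2 * ((c.2 : ℤ) - (c.1 : ℤ)) + M ∧
      0 ≤ -(2 * ((c.2 : ℤ) - (c.1 : ℤ))) + M := by
    intro c hc
    have h1 : c.1 ≤ lam.cells.sup (fun c => max c.1 c.2) :=
      le_trans (le_max_left _ _) (Finset.le_sup (f := fun c => max c.1 c.2) hc)
    have h2 : c.2 ≤ lam.cells.sup (fun c => max c.1 c.2) :=
      le_trans (le_max_right _ _) (Finset.le_sup (f := fun c => max c.1 c.2) hc)
    constructor <;> push_cast [hM] <;> omega
  set A' : P := ∑ c ∈ lam.cells, X 1 ^ (2 * ((c.2 : ℤ) - (c.1 : ℤ)) + M).toNat with hA'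
  set B' : P := ∑ c ∈ lam.cells, X 1 ^ (-(2 * ((c.2 : ℤ) - (c.1 : ℤ))) + M).toNat with hB'
  have hApow : ∀ c ∈ lam.cells,
      s ^ (2 * ((c.2 : ℤ) - (c.1 : ℤ))) * s ^ (M : ℤ) =
        algebraMap P F (X 1 ^ (2 * ((c.2 : ℤ) - (c.1 : ℤ)) + M).toNat) := by
    intro c hc
    rw [← zpow_add₀ hs, map_pow]
    rw [show algebraMap P F (X 1) = s from rfl, ← zpow_natCast s,
      Int.toNat_of_nonneg (hbound c hc).1]
  have hBpow : ∀ c ∈ lam.cells,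
      s ^ (-(2 * ((c.2 : ℤ) - (c.1 : ℤ)))) * s ^ (M : ℤ) =
        algebraMap P F (X 1 ^ (-(2 * ((c.2 : ℤ) - (c.1 : ℤ))) + M).toNat) := by
    intro c hc
    rw [← zpow_add₀ hs, map_pow]
    rw [show algebraMap P F (X 1) = s from rfl, ← zpow_natCast s,
      Int.toNat_of_nonneg (hbound c hc).2]
  have hA : (∑ c ∈ lam.cells, s ^ (2 * ((c.2 : ℤ) - (c.1 : ℤ)))) * s ^ (M : ℤ) =
      algebraMap P F A' := by
    rw [Finset.sum_mul, hA', map_sum]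
    exact Finset.sum_congr rfl hApow
  have hB : (∑ c ∈ lam.cells, s ^ (-(2 * ((c.2 : ℤ) - (c.1 : ℤ))))) * s ^ (M : ℤ) =
      algebraMap P F B' := by
    rw [Finset.sum_mul, hB', map_sum]
    exact Finset.sum_congr rfl hBpow
  have key : cLam lam * (α * s * s ^ (M : ℤ)) =
      algebraMap P F ((X 1 ^ 2 - 1) * (X 0 ^ 2 * A' - B')) := by
    have expand : algebraMap P F ((X 1 ^ 2 - 1) * (X 0 ^ 2 * A' - B')) =
        (s ^ 2 - 1) * (α ^ 2 * algebraMap P F A' - algebraMap P F B') := by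
      simp only [map_mul, map_sub, map_pow, map_one]; rfl
    rw [expand, ← hA, ← hB, cLam]
    field_simp
  intro hzero
  rw [hzero, zero_mul] at key
  have hrhs : ((X 1 ^ 2 - 1 : P) * (X 0 ^ 2 * A' - B')) ≠ 0 := by
    apply mul_ne_zero
    · intro hc
      have := congrArg constantCoeff hc
      simp at this
    · intro hc
      have := congrArg (eval (fun i : Fin 2 => if i = 0 then (2 : ℚ) else 1)) hc
      simp [hA', hB', eval_sum] at this
      have hcard : lam.cells.card ≠ 0 := Finset.card_ne_zero_of_mem hne.choose_spec
      have hq : (lam.cells.card : ℚ) = 0 := by linarith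
      exact hcard (by exact_mod_cast hq)
  exact hrhs (hι (by rw [← key, map_zero]))
end

section
/- Let A be an associative unital algebra over a commutative ring k with invertible elements α, s, and s − s⁻¹. Suppose σ ∈ A is invertible and h ∈ A satisfies σ − σ⁻¹ = (s − s⁻¹)(1 − h) and σ·h = α⁻¹·h. Then σ satisfies the cubic relation (σ − s)·(σ + s⁻¹)·(σ − α⁻¹) = 0. -/
/-- The cubic relation `(σ − s)(σ + s⁻¹)(σ − α⁻¹) = 0` in the BMW algebra. -/
theorem bmw_cubic {k A : Type*} [CommRing k] [Ring A] [Algebra k A]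
    (a ai ss si w : k) (ha : a * ai = 1) (hs : ss * si = 1) (hw : (ss - si) * w = 1)
    (σ σi : A) (hσ : σ * σi = 1) (hσ' : σi * σ = 1)
    (h : A) (hskein : σ - σi = (ss - si) • ((1 : A) - h))
    (h1 : σ * h = ai • h) :
    (σ - ss • (1 : A)) * (σ + si • (1 : A)) * (σ - ai • (1 : A)) = 0 := by
  -- cancellation of the invertible scalar (ss - si)
  have cancel : ∀ x y : A, (ss - si) • x = (ss - si) • y → x = y := by
    intro x y hxy
    have := congrArg (fun z => w • z) hxy
    simpa [smul_smul, mul_comm w (ss - si), hw] using this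
  -- h commutes with σ : h * σ = ai • h
  have hcomm : h * σ = ai • h := by
    have e : σ * (σ - σi) = (σ - σi) * σ := by
      rw [mul_sub, sub_mul, hσ, hσ']
    rw [hskein, mul_smul_comm, smul_mul_assoc] at e
    have e2 := cancel _ _ e
    rw [mul_sub, mul_one, sub_mul, one_mul, h1] at e2
    exact (sub_right_injective e2).symm
  -- key quadratic identity
  have key : σ * σ - 1 = (ss - si) • σ - ((ss - si) * ai) • h := by
    have : σ * σ - 1 = σ * (σ - σi) := by rw [mul_sub, hσ]
    rw [this, hskein, mul_smul_comm, mul_sub, mul_one, h1, smul_sub, smul_smul]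
  -- expand and finish
  have expand : (σ - ss • (1 : A)) * (σ + si • (1 : A))
      = σ * σ - (ss - si) • σ - 1 := by
    have hss : (ss • (1 : A)) * (si • (1 : A)) = 1 := by
      rw [smul_mul_smul_comm, one_mul, hs, one_smul]
    rw [sub_mul, mul_add, mul_add, hss]
    rw [mul_smul_comm, smul_mul_assoc, one_mul, mul_one, sub_smul]
    abel
  have expand2 : (σ - ss • (1 : A)) * (σ + si • (1 : A))
      = -(((ss - si) * ai) • h) := by
    rw [expand, sub_right_comm, key]; abel
  rw [expand2, neg_mul, mul_sub, smul_mul_assoc, hcomm, mul_smul_comm, mul_one,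
    smul_smul, smul_smul, mul_comm ai]
  simp
end

section
/- For every n ≥ 1, the number of pairs (Λ, Γ) of up-and-down tableaux of length n with Λ_n = Γ_n equals (2n − 1)!! = 1·3·5···(2n − 1). Equivalently, Σ_μ (u_n(μ))² = (2n−1)!!, where u_n(μ) is the number of up-and-down tableaux of length n with final diagram μ. -/
/-- The single-cell Young diagram. -/
noncomputable def box : YoungDiagram := YoungDiagram.ofRowLens [1] (by unfold List.SortedGE; intro i j _; fin_cases i; fin_cases j; exact le_rfl)

/-- Two Young diagrams differ by exactly one cell (one is obtained from the
other by adding a single cell). -/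
def Adj (μ ν : YoungDiagram) : Prop :=
  (μ ≤ ν ∧ ν.card = μ.card + 1) ∨ (ν ≤ μ ∧ μ.card = ν.card + 1)

/-- An up-and-down tableau of length `n`: a sequence of Young diagrams starting
at the single cell, each consecutive pair differing by exactly one cell. -/
def IsUpDown {n : ℕ} (f : Fin n → YoungDiagram) : Prop :=
  (∀ h0 : 0 < n, f ⟨0, h0⟩ = box) ∧
    ∀ i : ℕ, ∀ h : i + 1 < n, Adj (f ⟨i, Nat.lt_of_succ_lt h⟩) (f ⟨i + 1, h⟩)

namespace UD

def Cov (μ ν : YoungDiagram) : Prop := μ ≤ ν ∧ ν.card = μ.card + 1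

lemma adj_iff {μ ν : YoungDiagram} : Adj μ ν ↔ Cov μ ν ∨ Cov ν μ := Iff.rfl

lemma adj_symm {μ ν : YoungDiagram} (h : Adj μ ν) : Adj ν μ := h.symm

lemma cells_injective : Function.Injective YoungDiagram.cells := by
  intro a b h
  cases a; cases b; simpa using h

lemma box_cells : box.cells = {(0,0)} := by
  show (YoungDiagram.ofRowLens [1] (by unfold List.SortedGE; intro i j _; fin_cases i; fin_cases j; exact le_rfl)).cells = {(0,0)}
  decide

lemma box_card : box.card = 1 := by
  show box.cells.card = 1
  rw [box_cells]; rfl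

lemma card_eq_one {ν : YoungDiagram} (h : ν.card = 1) : ν = box := by
  apply cells_injective
  rw [box_cells]
  obtain ⟨c, hc⟩ := Finset.card_eq_one.mp h
  have h0 : (0, 0) ∈ ν := by
    have := ν.up_left_mem (i2 := c.1) (j2 := c.2) (Nat.zero_le _) (Nat.zero_le _)
      (by rw [← YoungDiagram.mem_cells, hc]; simp)
    exact this
  rw [← YoungDiagram.mem_cells, hc, Finset.mem_singleton] at h0
  rw [hc, h0]

lemma mem_le_card {μ : YoungDiagram} {i j : ℕ} (h : (i, j) ∈ μ) :
    i < μ.card ∧ j < μ.card := by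
  constructor
  · exact lt_of_lt_of_le (YoungDiagram.mem_iff_lt_colLen.mp h)
      (by rw [YoungDiagram.colLen_eq_card]; exact Finset.card_filter_le _ _)
  · exact lt_of_lt_of_le (YoungDiagram.mem_iff_lt_rowLen.mp h)
      (by rw [YoungDiagram.rowLen_eq_card]; exact Finset.card_filter_le _ _)

lemma bounded_finite (N : ℕ) : {ν : YoungDiagram | ν.card ≤ N}.Finite := by
  apply Set.Finite.of_finite_image _ (cells_injective.injOn)
  apply Set.Finite.subset (Set.finite_Iic (Finset.range N ×ˢ Finset.range N))
  rintro s ⟨ν, hν, rfl⟩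
  simp only [Set.mem_Iic, Finset.le_iff_subset]
  intro c hc
  rw [YoungDiagram.mem_cells] at hc
  obtain ⟨h1, h2⟩ := mem_le_card (show (c.1, c.2) ∈ ν from hc)
  simp only [Finset.mem_product, Finset.mem_range]
  exact ⟨lt_of_lt_of_le h1 hν, lt_of_lt_of_le h2 hν⟩

/-- upper covers of μ -/
noncomputable def upCov (μ : YoungDiagram) : Finset YoungDiagram :=
  (Set.Finite.subset (bounded_finite (μ.card + 1))
    (fun ν (hν : Cov μ ν) => le_of_eq hν.2)).toFinset

lemma mem_upCov {μ ν : YoungDiagram} : ν ∈ upCov μ ↔ Cov μ ν := Set.Finite.mem_toFinset _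

/-- lower covers of μ -/
noncomputable def downCov (μ : YoungDiagram) : Finset YoungDiagram :=
  (show {ν : YoungDiagram | Cov ν μ}.Finite from
    Set.Finite.subset (bounded_finite μ.card)
      (fun ν (hν : Cov ν μ) => show ν.card ≤ μ.card by have := hν.2; omega)).toFinset

lemma mem_downCov {μ ν : YoungDiagram} : ν ∈ downCov μ ↔ Cov ν μ := Set.Finite.mem_toFinset _

lemma eq_of_le_card {μ ν : YoungDiagram} (h : μ ≤ ν) (hc : ν.card ≤ μ.card) : μ = ν :=
  (cells_injective (Finset.eq_of_subset_of_card_le (YoungDiagram.cells_subset_iff.mpr h) hc).symm).symm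

lemma card_sup_add_card_inf (μ ν : YoungDiagram) :
    (μ ⊔ ν).card + (μ ⊓ ν).card = μ.card + ν.card := by
  show (μ ⊔ ν).cells.card + (μ ⊓ ν).cells.card = _
  rw [YoungDiagram.cells_sup, YoungDiagram.cells_inf]
  exact Finset.card_union_add_card_inter _ _


lemma card_def (μ : YoungDiagram) : μ.card = μ.cells.card := rfl

lemma rowLen_pos_iff {μ : YoungDiagram} {i : ℕ} : 0 < μ.rowLen i ↔ i < μ.colLen 0 := by
  rw [← YoungDiagram.mem_iff_lt_rowLen, ← YoungDiagram.mem_iff_lt_colLen]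

def addable (μ : YoungDiagram) : Finset ℕ :=
  (Finset.range (μ.colLen 0 + 1)).filter (fun i => i = 0 ∨ μ.rowLen i < μ.rowLen (i-1))

def removable (μ : YoungDiagram) : Finset ℕ :=
  (Finset.range (μ.colLen 0 + 1)).filter (fun i => μ.rowLen (i+1) < μ.rowLen i)

lemma mem_addable {μ : YoungDiagram} {i : ℕ} :
    i ∈ addable μ ↔ (i = 0 ∨ μ.rowLen i < μ.rowLen (i-1)) := by
  simp only [addable, Finset.mem_filter, Finset.mem_range, and_iff_right_iff_imp]
  rintro (rfl | h)
  · omega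
  · have : 0 < μ.rowLen (i-1) := by omega
    rw [rowLen_pos_iff] at this
    omega

lemma mem_removable {μ : YoungDiagram} {i : ℕ} :
    i ∈ removable μ ↔ μ.rowLen (i+1) < μ.rowLen i := by
  simp only [removable, Finset.mem_filter, Finset.mem_range, and_iff_right_iff_imp]
  intro h
  have : 0 < μ.rowLen i := by omega
  rw [rowLen_pos_iff] at this
  omega

lemma card_addable (μ : YoungDiagram) :
    (addable μ).card = (removable μ).card + 1 := by
  have h : addable μ = insert 0 ((removable μ).image (· + 1)) := by
    ext i
    rw [mem_addable, Finset.mem_insert]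
    constructor
    · rintro (rfl | h)
      · exact Or.inl rfl
      · rcases Nat.eq_zero_or_pos i with rfl | hi
        · exact Or.inl rfl
        · right
          refine Finset.mem_image.mpr ⟨i - 1, mem_removable.mpr ?_, by omega⟩
          have hieq : i - 1 + 1 = i := by omega
          rw [hieq]; exact h
    · rintro (rfl | h)
      · exact Or.inl rfl
      · obtain ⟨j, hj, rfl⟩ := Finset.mem_image.mp h
        right
        simpa using mem_removable.mp hj
  rw [h, Finset.card_insert_of_notMem (by simp),
    Finset.card_image_of_injective _ (add_left_injective 1)]

lemma not_mem_corner (μ : YoungDiagram) (i : ℕ) : (i, μ.rowLen i) ∉ μ := by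
  rw [YoungDiagram.mem_iff_lt_rowLen]; omega

/-- Add a cell at the end of row `i`. -/
def addCell (μ : YoungDiagram) (i : ℕ) (hv : i = 0 ∨ μ.rowLen i < μ.rowLen (i-1)) :
    YoungDiagram where
  cells := insert (i, μ.rowLen i) μ.cells
  isLowerSet := by
    rintro ⟨c, d⟩ ⟨a, b⟩ ⟨hac, hbd⟩ hmem
    simp only [Finset.coe_insert, Set.mem_insert_iff, Finset.mem_coe,
      YoungDiagram.mem_cells] at hmem ⊢
    simp only [Prod.mk.injEq] at hmem
    rcases hmem with ⟨hc2, hd2⟩ | hmem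
    · rw [hc2] at hac; rw [hd2] at hbd
      simp only [Prod.mk.injEq]
      rcases Nat.lt_or_ge b (μ.rowLen i) with hb | hb
      · exact Or.inr (YoungDiagram.mem_iff_lt_rowLen.mpr
          (lt_of_lt_of_le hb (μ.rowLen_anti _ _ hac)))
      · have hbeq : b = μ.rowLen i := le_antisymm hbd hb
        rcases Nat.lt_or_ge a i with ha | ha
        · rcases hv with rfl | hv
          · omega
          · refine Or.inr (YoungDiagram.mem_iff_lt_rowLen.mpr ?_)
            have h1 : μ.rowLen (i-1) ≤ μ.rowLen a := μ.rowLen_anti _ _ (by omega)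
            omega
        · exact Or.inl ⟨le_antisymm hac ha, hbeq⟩
    · exact Or.inr (μ.up_left_mem hac hbd hmem)

lemma addCell_cells {μ : YoungDiagram} {i : ℕ} {hv} :
    (addCell μ i hv).cells = insert (i, μ.rowLen i) μ.cells := rfl

lemma cov_addCell (μ : YoungDiagram) (i : ℕ) (hv) : Cov μ (addCell μ i hv) := by
  constructor
  · rw [← YoungDiagram.cells_subset_iff, addCell_cells]
    exact Finset.subset_insert _ _
  · rw [card_def, card_def, addCell_cells,
      Finset.card_insert_of_notMem (by simpa using not_mem_corner μ i)]

lemma cov_up_struct {μ ν : YoungDiagram} (h : Cov μ ν) :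
    ∃ i hv, ν = addCell μ i hv := by
  obtain ⟨hle, hcard⟩ := h
  have hsub : μ.cells ⊆ ν.cells := YoungDiagram.cells_subset_iff.mpr hle
  have hsd : (ν.cells \ μ.cells).card = 1 := by
    rw [Finset.card_sdiff_of_subset hsub, ← card_def, ← card_def]; omega
  obtain ⟨c, hc⟩ := Finset.card_eq_one.mp hsd
  have hcmem : c ∈ ν.cells ∧ c ∉ μ.cells := by
    have : c ∈ ν.cells \ μ.cells := hc ▸ Finset.mem_singleton_self c
    simpa using this
  obtain ⟨a, b⟩ := c
  have hmem_sd : ∀ x : ℕ × ℕ, x ∈ ν → x ∉ μ → x = (a, b) := by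
    intro x hx hxn
    have : x ∈ ν.cells \ μ.cells := Finset.mem_sdiff.mpr
      ⟨(YoungDiagram.mem_cells x).mpr hx, fun h => hxn ((YoungDiagram.mem_cells x).mp h)⟩
    rw [hc, Finset.mem_singleton] at this
    exact this
  have hb : b = μ.rowLen a := by
    have hge : μ.rowLen a ≤ b := by
      by_contra hlt
      exact hcmem.2 ((YoungDiagram.mem_cells _).mpr
        (YoungDiagram.mem_iff_lt_rowLen.mpr (by omega)))
    rcases Nat.eq_or_lt_of_le hge with heq | hlt
    · omega
    · exfalso
      have h1 : (a, μ.rowLen a) ∈ ν := ν.up_left_mem le_rfl (le_of_lt hlt)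
        ((YoungDiagram.mem_cells _).mp hcmem.1)
      have h2 := hmem_sd _ h1 (not_mem_corner μ a)
      have := congrArg Prod.snd h2
      simp only at this
      omega
  subst hb
  have hv : a = 0 ∨ μ.rowLen a < μ.rowLen (a-1) := by
    rcases Nat.eq_zero_or_pos a with rfl | ha
    · exact Or.inl rfl
    · right
      have h1 : (a - 1, μ.rowLen a) ∈ ν := ν.up_left_mem (Nat.sub_le a 1) le_rfl
        ((YoungDiagram.mem_cells _).mp hcmem.1)
      have h2 : (a - 1, μ.rowLen a) ∈ μ := by
        by_contra h2
        have := congrArg Prod.fst (hmem_sd _ h1 h2)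
        simp only at this
        omega
      rw [YoungDiagram.mem_iff_lt_rowLen] at h2
      exact h2
  refine ⟨a, hv, ?_⟩
  apply cells_injective
  rw [addCell_cells]
  ext x
  simp only [Finset.mem_insert]
  constructor
  · intro hx
    by_cases hxin : x ∈ μ.cells
    · exact Or.inr hxin
    · exact Or.inl (hmem_sd x ((YoungDiagram.mem_cells x).mp hx)
        (fun h => hxin ((YoungDiagram.mem_cells x).mpr h)))
  · rintro (rfl | hx)
    · exact hcmem.1
    · exact hsub hx

/-- Delete the last cell of row `i`. -/
def delCell (μ : YoungDiagram) (i : ℕ) (hv : μ.rowLen (i+1) < μ.rowLen i) :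
    YoungDiagram where
  cells := μ.cells.erase (i, μ.rowLen i - 1)
  isLowerSet := by
    rintro ⟨c, d⟩ ⟨a, b⟩ ⟨hac, hbd⟩ hmem
    simp only [Finset.coe_erase, Set.mem_diff, Finset.mem_coe, YoungDiagram.mem_cells,
      Set.mem_singleton_iff] at hmem ⊢
    obtain ⟨hcd, hne⟩ := hmem
    refine ⟨μ.up_left_mem hac hbd hcd, ?_⟩
    rintro heq
    obtain ⟨ha2, hb2⟩ : a = i ∧ b = μ.rowLen i - 1 :=
      ⟨congrArg Prod.fst heq, congrArg Prod.snd heq⟩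
    subst ha2; subst hb2
    have hd : d < μ.rowLen c := YoungDiagram.mem_iff_lt_rowLen.mp hcd
    have hrc : μ.rowLen c ≤ μ.rowLen a := μ.rowLen_anti _ _ hac
    have hci : c = a := by
      by_contra hne2
      have : μ.rowLen c ≤ μ.rowLen (a+1) := μ.rowLen_anti _ _ (by simp at hac; omega)
      omega
    subst hci
    apply hne
    have : d = μ.rowLen c - 1 := by simp at hbd; omega
    rw [this]

lemma delCell_cells {μ : YoungDiagram} {i : ℕ} {hv} :
    (delCell μ i hv).cells = μ.cells.erase (i, μ.rowLen i - 1) := rfl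

lemma corner_mem {μ : YoungDiagram} {i : ℕ} (hv : μ.rowLen (i+1) < μ.rowLen i) :
    (i, μ.rowLen i - 1) ∈ μ := by
  rw [YoungDiagram.mem_iff_lt_rowLen]; omega

lemma cov_delCell (μ : YoungDiagram) (i : ℕ) (hv) : Cov (delCell μ i hv) μ := by
  constructor
  · rw [← YoungDiagram.cells_subset_iff, delCell_cells]
    exact Finset.erase_subset _ _
  · rw [card_def, card_def, delCell_cells,
      Finset.card_erase_of_mem (by simpa using corner_mem hv)]
    have : 0 < μ.cells.card := Finset.card_pos.mpr
      ⟨_, (YoungDiagram.mem_cells _).mpr (corner_mem hv)⟩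
    omega

lemma cov_down_struct {μ lam : YoungDiagram} (h : Cov lam μ) :
    ∃ i hv, lam = delCell μ i hv := by
  obtain ⟨hle, hcard⟩ := h
  have hsub : lam.cells ⊆ μ.cells := YoungDiagram.cells_subset_iff.mpr hle
  have hsd : (μ.cells \ lam.cells).card = 1 := by
    rw [Finset.card_sdiff_of_subset hsub, ← card_def, ← card_def]; omega
  obtain ⟨c, hc⟩ := Finset.card_eq_one.mp hsd
  have hcmem : c ∈ μ.cells ∧ c ∉ lam.cells := by
    have : c ∈ μ.cells \ lam.cells := hc ▸ Finset.mem_singleton_self c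
    simpa using this
  obtain ⟨a, b⟩ := c
  have hmem_of_ne : ∀ x : ℕ × ℕ, x ∈ μ → x ≠ (a, b) → x ∈ lam := by
    intro x hx hne
    by_contra hxn
    have : x ∈ μ.cells \ lam.cells := Finset.mem_sdiff.mpr
      ⟨(YoungDiagram.mem_cells x).mpr hx, fun h => hxn ((YoungDiagram.mem_cells x).mp h)⟩
    rw [hc, Finset.mem_singleton] at this
    exact hne this
  have hab : b < μ.rowLen a := YoungDiagram.mem_iff_lt_rowLen.mp
    ((YoungDiagram.mem_cells _).mp hcmem.1)
  have hb : b = μ.rowLen a - 1 := by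
    by_contra hbne
    have h1 : (a, b+1) ∈ μ := YoungDiagram.mem_iff_lt_rowLen.mpr (by omega)
    have h2 : (a, b+1) ∈ lam := hmem_of_ne _ h1 (by simp)
    have h3 : (a, b) ∈ lam := lam.up_left_mem le_rfl (by omega) h2
    exact hcmem.2 ((YoungDiagram.mem_cells _).mpr h3)
  have hv : μ.rowLen (a+1) < μ.rowLen a := by
    rcases Nat.lt_or_ge (μ.rowLen (a+1)) (μ.rowLen a) with h | h
    · exact h
    · exfalso
      have heq : μ.rowLen (a+1) = μ.rowLen a := le_antisymm (μ.rowLen_anti _ _ (by omega)) h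
      have h1 : (a+1, b) ∈ μ := YoungDiagram.mem_iff_lt_rowLen.mpr (by omega)
      have h2 : (a+1, b) ∈ lam := hmem_of_ne _ h1 (by simp)
      have h3 : (a, b) ∈ lam := lam.up_left_mem (by omega) le_rfl h2
      exact hcmem.2 ((YoungDiagram.mem_cells _).mpr h3)
  subst hb
  refine ⟨a, hv, ?_⟩
  apply cells_injective
  rw [delCell_cells]
  ext x
  rw [Finset.mem_erase]
  constructor
  · intro hx
    refine ⟨?_, hsub hx⟩
    rintro rfl
    exact hcmem.2 hx
  · rintro ⟨hne, hx⟩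
    exact (YoungDiagram.mem_cells x).mpr
      (hmem_of_ne _ ((YoungDiagram.mem_cells x).mp hx) hne)

lemma addCell_inj {μ : YoungDiagram} {i j : ℕ} {hvi hvj}
    (h : addCell μ i hvi = addCell μ j hvj) : i = j := by
  have h1 : ((i, μ.rowLen i) : ℕ × ℕ) ∈ (addCell μ j hvj).cells := by
    rw [← h, addCell_cells]; exact Finset.mem_insert_self _ _
  rw [addCell_cells, Finset.mem_insert] at h1
  rcases h1 with heq | hmem
  · exact congrArg Prod.fst heq
  · exact absurd ((YoungDiagram.mem_cells _).mp hmem) (not_mem_corner μ i)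

lemma delCell_inj {μ : YoungDiagram} {i j : ℕ} {hvi hvj}
    (h : delCell μ i hvi = delCell μ j hvj) : i = j := by
  by_contra hne
  have h1 : ((i, μ.rowLen i - 1) : ℕ × ℕ) ∈ (delCell μ j hvj).cells := by
    rw [delCell_cells, Finset.mem_erase]
    exact ⟨by simp [Prod.ext_iff]; intro hij; omega,
      (YoungDiagram.mem_cells _).mpr (corner_mem hvi)⟩
  rw [← h, delCell_cells, Finset.mem_erase] at h1
  exact h1.1 rfl

noncomputable instance : DecidableEq YoungDiagram := Classical.decEq _

lemma card_upCov (μ : YoungDiagram) : (upCov μ).card = (removable μ).card + 1 := by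
  rw [← card_addable]
  exact (Finset.card_bij
    (fun i hi => addCell μ i (mem_addable.mp hi))
    (fun i hi => mem_upCov.mpr (cov_addCell μ i _))
    (fun i hi j hj h => addCell_inj h)
    (fun ν hν => by
      obtain ⟨i, hv, rfl⟩ := cov_up_struct (mem_upCov.mp hν)
      exact ⟨i, mem_addable.mpr hv, rfl⟩)).symm

lemma card_downCov (μ : YoungDiagram) : (downCov μ).card = (removable μ).card := by
  exact (Finset.card_bij
    (fun i hi => delCell μ i (mem_removable.mp hi))
    (fun i hi => mem_downCov.mpr (cov_delCell μ i _))
    (fun i hi j hj h => delCell_inj h)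
    (fun ν hν => by
      obtain ⟨i, hv, rfl⟩ := cov_down_struct (mem_downCov.mp hν)
      exact ⟨i, mem_removable.mpr hv, rfl⟩)).symm

lemma card_upCov_eq (μ : YoungDiagram) : (upCov μ).card = (downCov μ).card + 1 := by
  rw [card_upCov, card_downCov]

lemma card_lt_of_lt {μ ν : YoungDiagram} (h : μ < ν) : μ.card < ν.card :=
  Finset.card_lt_card (YoungDiagram.cells_ssubset_iff.mpr h)

lemma common_up_to_down {μ lam ν : YoungDiagram} (h1 : Cov μ ν) (h2 : Cov lam ν)
    (hne : lam ≠ μ) : Cov (μ ⊓ lam) μ ∧ Cov (μ ⊓ lam) lam ∧ μ ⊔ lam = ν := by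
  have e1 := h1.2; have e2 := h2.2
  have hcards : μ.card = lam.card := by omega
  have hsuple : μ ⊔ lam ≤ ν := sup_le h1.1 h2.1
  have hlt : μ < μ ⊔ lam := by
    rcases lt_or_eq_of_le (le_sup_left : μ ≤ μ ⊔ lam) with h | h
    · exact h
    · exfalso
      have hlam : lam ≤ μ := by rw [h]; exact le_sup_right
      exact hne (eq_of_le_card hlam (le_of_eq hcards))
  have hc1 : μ.card < (μ ⊔ lam).card := card_lt_of_lt hlt
  have hc2 : (μ ⊔ lam).card ≤ ν.card := by
    rcases lt_or_eq_of_le hsuple with h | h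
    · exact le_of_lt (card_lt_of_lt h)
    · rw [h]
  have hsupcard : (μ ⊔ lam).card = μ.card + 1 := by omega
  have hsup : μ ⊔ lam = ν := eq_of_le_card hsuple (by omega)
  have hinf := card_sup_add_card_inf μ lam
  refine ⟨⟨inf_le_left, by omega⟩, ⟨inf_le_right, by omega⟩, hsup⟩

lemma common_down_to_up {μ lam ν : YoungDiagram} (h1 : Cov ν μ) (h2 : Cov ν lam)
    (hne : lam ≠ μ) : Cov μ (μ ⊔ lam) ∧ Cov lam (μ ⊔ lam) ∧ μ ⊓ lam = ν := by
  have e1 := h1.2; have e2 := h2.2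
  have hcards : μ.card = lam.card := by omega
  have hinfle : ν ≤ μ ⊓ lam := le_inf h1.1 h2.1
  have hlt : μ ⊓ lam < μ := by
    rcases lt_or_eq_of_le (inf_le_left : μ ⊓ lam ≤ μ) with h | h
    · exact h
    · exfalso
      have hlam : μ ≤ lam := by rw [← h]; exact inf_le_right
      exact hne (eq_of_le_card hlam (le_of_eq hcards.symm)).symm
  have hc1 : (μ ⊓ lam).card < μ.card := card_lt_of_lt hlt
  have hc2 : ν.card ≤ (μ ⊓ lam).card := by
    rcases lt_or_eq_of_le hinfle with h | h
    · exact le_of_lt (card_lt_of_lt h)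
    · rw [h]
  have hinfcard : (μ ⊓ lam).card + 1 = μ.card := by omega
  have hinf : μ ⊓ lam = ν := (eq_of_le_card hinfle (by omega)).symm
  have hsum := card_sup_add_card_inf μ lam
  refine ⟨⟨le_sup_left, by omega⟩, ⟨le_sup_right, by omega⟩, hinf⟩

/-- apply one up-step: sum over lower covers -/
noncomputable def Uop (f : YoungDiagram → ℕ) (μ : YoungDiagram) : ℕ :=
  ∑ ν ∈ downCov μ, f ν

/-- apply one down-step: sum over upper covers -/
noncomputable def Dop (f : YoungDiagram → ℕ) (μ : YoungDiagram) : ℕ :=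
  ∑ ν ∈ upCov μ, f ν

noncomputable def Aop (f : YoungDiagram → ℕ) (μ : YoungDiagram) : ℕ :=
  Uop f μ + Dop f μ

lemma comm_DU (f : YoungDiagram → ℕ) (μ : YoungDiagram) :
    Dop (Uop f) μ = Uop (Dop f) μ + f μ := by
  unfold Dop Uop
  have hL : ∀ ν ∈ upCov μ, ∑ lam ∈ downCov ν, f lam
      = (∑ lam ∈ (downCov ν).erase μ, f lam) + f μ := by
    intro ν hν
    exact (Finset.sum_erase_add _ _ (mem_downCov.mpr (mem_upCov.mp hν))).symm
  have hR : ∀ ν ∈ downCov μ, ∑ lam ∈ upCov ν, f lam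
      = (∑ lam ∈ (upCov ν).erase μ, f lam) + f μ := by
    intro ν hν
    exact (Finset.sum_erase_add _ _ (mem_upCov.mpr (mem_downCov.mp hν))).symm
  have hmain : ∑ ν ∈ upCov μ, ∑ lam ∈ (downCov ν).erase μ, f lam
      = ∑ ν ∈ downCov μ, ∑ lam ∈ (upCov ν).erase μ, f lam := by
    have l1 : ∑ ν ∈ upCov μ, ∑ lam ∈ (downCov ν).erase μ, f lam
        = ∑ p ∈ (upCov μ).sigma (fun ν => (downCov ν).erase μ), f p.2 :=
      (Finset.sum_sigma (upCov μ) (fun ν => (downCov ν).erase μ) (fun p => f p.2)).symm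
    have l2 : ∑ ν ∈ downCov μ, ∑ lam ∈ (upCov ν).erase μ, f lam
        = ∑ p ∈ (downCov μ).sigma (fun ν => (upCov ν).erase μ), f p.2 :=
      (Finset.sum_sigma (downCov μ) (fun ν => (upCov ν).erase μ) (fun p => f p.2)).symm
    rw [l1, l2]
    refine Finset.sum_bij' (fun p _ => ⟨μ ⊓ p.2, p.2⟩) (fun p _ => ⟨μ ⊔ p.2, p.2⟩)
      ?_ ?_ ?_ ?_ ?_
    · rintro ⟨ν, lam⟩ hp
      rw [Finset.mem_sigma] at hp
      obtain ⟨hν, hlam⟩ := hp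
      rw [Finset.mem_erase, mem_downCov] at hlam
      obtain ⟨hCm, hCl, hsup⟩ := common_up_to_down (mem_upCov.mp hν) hlam.2 hlam.1
      rw [Finset.mem_sigma, Finset.mem_erase]
      exact ⟨mem_downCov.mpr hCm, hlam.1, mem_upCov.mpr hCl⟩
    · rintro ⟨ν, lam⟩ hp
      rw [Finset.mem_sigma] at hp
      obtain ⟨hν, hlam⟩ := hp
      rw [Finset.mem_erase, mem_upCov] at hlam
      obtain ⟨hCm, hCl, hinf⟩ := common_down_to_up (mem_downCov.mp hν) hlam.2 hlam.1
      rw [Finset.mem_sigma, Finset.mem_erase]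
      exact ⟨mem_upCov.mpr hCm, hlam.1, mem_downCov.mpr hCl⟩
    · rintro ⟨ν, lam⟩ hp
      rw [Finset.mem_sigma] at hp
      obtain ⟨hν, hlam⟩ := hp
      rw [Finset.mem_erase, mem_downCov] at hlam
      obtain ⟨_, _, hsup⟩ := common_up_to_down (mem_upCov.mp hν) hlam.2 hlam.1
      simpa using hsup
    · rintro ⟨ν, lam⟩ hp
      rw [Finset.mem_sigma] at hp
      obtain ⟨hν, hlam⟩ := hp
      rw [Finset.mem_erase, mem_upCov] at hlam
      obtain ⟨_, _, hinf⟩ := common_down_to_up (mem_downCov.mp hν) hlam.2 hlam.1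
      simpa using hinf
    · rintro ⟨ν, lam⟩ hp
      rfl
  rw [Finset.sum_congr rfl hL, Finset.sum_congr rfl hR,
    Finset.sum_add_distrib, Finset.sum_add_distrib, Finset.sum_const, Finset.sum_const,
    card_upCov_eq, hmain]
  simp only [smul_eq_mul]
  ring

lemma Dop_Aop (f : YoungDiagram → ℕ) (μ : YoungDiagram) :
    Dop (Aop f) μ = Aop (Dop f) μ + f μ := by
  have h1 : Dop (Aop f) μ = Dop (Uop f) μ + Dop (Dop f) μ := by
    show (∑ ν ∈ upCov μ, Aop f ν) = _
    unfold Aop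
    rw [Finset.sum_add_distrib]
    rfl
  rw [h1, comm_DU]
  show _ = Uop (Dop f) μ + Dop (Dop f) μ + f μ
  ring

lemma Aop_mul (c : ℕ) (f : YoungDiagram → ℕ) (μ : YoungDiagram) :
    Aop (fun x => c * f x) μ = c * Aop f μ := by
  unfold Aop Uop Dop
  rw [← Finset.mul_sum, ← Finset.mul_sum]
  ring

lemma Aop_zero (μ : YoungDiagram) : Aop (fun _ => 0) μ = 0 := by
  simp [Aop, Uop, Dop]

lemma bot_card : (⊥ : YoungDiagram).card = 0 := by
  rw [card_def, YoungDiagram.cells_bot]; rfl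

lemma downCov_bot : downCov (⊥ : YoungDiagram) = ∅ := by
  ext ν
  simp only [Finset.notMem_empty, iff_false, mem_downCov]
  rintro ⟨_, hcard⟩
  rw [bot_card] at hcard
  omega

lemma Uop_bot (f : YoungDiagram → ℕ) : Uop f ⊥ = 0 := by
  unfold Uop
  rw [downCov_bot]
  rfl

noncomputable def vfun : ℕ → YoungDiagram → ℕ
  | 0 => fun μ => if μ = ⊥ then 1 else 0
  | (k+1) => Aop (vfun k)

lemma Dop_vzero (μ : YoungDiagram) : Dop (vfun 0) μ = 0 := by
  apply Finset.sum_eq_zero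
  intro ν hν
  have h := (mem_upCov.mp hν).2
  have : ν ≠ ⊥ := by
    intro hbot; rw [hbot, bot_card] at h; omega
  simp [vfun, this]

lemma Dop_vsucc : ∀ k μ, Dop (vfun (k+1)) μ = (k+1) * vfun k μ := by
  intro k
  induction k with
  | zero =>
    intro μ
    show Dop (Aop (vfun 0)) μ = 1 * vfun 0 μ
    rw [Dop_Aop]
    have hA : Aop (Dop (vfun 0)) μ = 0 := by
      have : Dop (vfun 0) = fun _ => 0 := funext Dop_vzero
      rw [this, Aop_zero]
    rw [hA]
    ring
  | succ k ih =>
    intro μ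
    show Dop (Aop (vfun (k+1))) μ = (k+2) * vfun (k+1) μ
    rw [Dop_Aop]
    have h2 : Aop (Dop (vfun (k+1))) μ = (k+1) * Aop (vfun k) μ := by
      have : Dop (vfun (k+1)) = fun x => (k+1) * vfun k x := funext (ih)
      rw [this, Aop_mul]
    rw [h2]
    show (k+1) * Aop (vfun k) μ + Aop (vfun k) μ = (k+2) * Aop (vfun k) μ
    ring

lemma vfun_bot_step (k : ℕ) : vfun (k+2) ⊥ = (k+1) * vfun k ⊥ := by
  show Uop (vfun (k+1)) ⊥ + Dop (vfun (k+1)) ⊥ = _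
  rw [Uop_bot, Dop_vsucc]
  omega

lemma vfun_even_bot (n : ℕ) : vfun (2*n) ⊥ = ∏ i ∈ Finset.range n, (2*i+1) := by
  induction n with
  | zero => simp [vfun]
  | succ n ih =>
    have h2 : 2*(n+1) = (2*n) + 2 := by ring
    rw [h2, vfun_bot_step, Finset.prod_range_succ, ← ih]
    ring


noncomputable def nbr (μ : YoungDiagram) : Finset YoungDiagram := downCov μ ∪ upCov μ

lemma mem_nbr {μ ν : YoungDiagram} : ν ∈ nbr μ ↔ Adj ν μ := by
  rw [nbr, Finset.mem_union, mem_downCov, mem_upCov]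
  exact Iff.rfl

lemma Aop_eq_sum_nbr (f : YoungDiagram → ℕ) (μ : YoungDiagram) :
    Aop f μ = ∑ ν ∈ nbr μ, f ν := by
  rw [nbr, Finset.sum_union]
  · rfl
  · rw [Finset.disjoint_left]
    intro ν h1 h2
    have := (mem_downCov.mp h1).2
    have := (mem_upCov.mp h2).2
    omega

def WalkProp (k : ℕ) (f : Fin (k+1) → YoungDiagram) : Prop :=
  f ⟨0, Nat.succ_pos k⟩ = ⊥ ∧
    ∀ i : ℕ, ∀ h : i + 1 < k + 1, Adj (f ⟨i, Nat.lt_of_succ_lt h⟩) (f ⟨i+1, h⟩)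

def WalkEnd (k : ℕ) (μ : YoungDiagram) :=
  {f : Fin (k+1) → YoungDiagram // WalkProp k f ∧ f (Fin.last k) = μ}

lemma walk_card_le {k : ℕ} {f : Fin (k+1) → YoungDiagram} (hw : WalkProp k f) :
    ∀ i, ∀ h : i < k + 1, (f ⟨i, h⟩).card ≤ i := by
  intro i
  induction i with
  | zero =>
    intro h
    rw [hw.1, bot_card]
  | succ i ih =>
    intro h
    have hAdj := hw.2 i h
    have hI := ih (Nat.lt_of_succ_lt h)
    rcases hAdj with ⟨_, hc⟩ | ⟨_, hc⟩ <;> omega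

instance walkEnd_finite (k : ℕ) (μ : YoungDiagram) : Finite (WalkEnd k μ) := by
  have hfin : Finite {ν : YoungDiagram // ν.card ≤ k} := (bounded_finite k).to_subtype
  apply Finite.of_injective
    (fun x : WalkEnd k μ => fun i : Fin (k+1) =>
      (⟨x.1 i, by
        have := walk_card_le x.2.1 i.1 i.2
        simpa using this.trans (Nat.lt_succ_iff.mp i.2)⟩ : {ν : YoungDiagram // ν.card ≤ k}))
  intro x y hxy
  apply Subtype.ext
  funext i
  exact congrArg Subtype.val (congrFun hxy i)

lemma walkEnd_zero_card (μ : YoungDiagram) : Nat.card (WalkEnd 0 μ) = vfun 0 μ := by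
  by_cases hμ : μ = ⊥
  · subst hμ
    have h1 : Nat.card (WalkEnd 0 ⊥) = 1 := by
      rw [Nat.card_eq_one_iff_unique]
      constructor
      · constructor
        intro x y
        apply Subtype.ext
        funext i
        have hi : i = Fin.last 0 := by apply Fin.ext; simp [Fin.last]
        rw [hi, x.2.2, y.2.2]
      · exact ⟨⟨fun _ => ⊥, ⟨rfl, fun i h => absurd h (by omega)⟩, rfl⟩⟩
    rw [h1]
    simp [vfun]
  · have : IsEmpty (WalkEnd 0 μ) := by
      constructor
      rintro ⟨f, ⟨h0, _⟩, hlast⟩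
      apply hμ
      rw [← hlast, ← h0]
      rfl
    rw [Nat.card_of_isEmpty]
    simp [vfun, hμ]

noncomputable def walkEquiv (k : ℕ) (μ : YoungDiagram) :
    WalkEnd (k+1) μ ≃ Σ ν : {ν // ν ∈ nbr μ}, WalkEnd k ν.1 where
  toFun x :=
    ⟨⟨x.1 ⟨k, by omega⟩, by
      rw [mem_nbr]
      have h2 := x.2.1.2 k (by omega)
      have hlast : x.1 ⟨k+1, by omega⟩ = μ := x.2.2
      rw [hlast] at h2
      exact h2⟩,
     ⟨fun i => x.1 ⟨i.1, by omega⟩,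
      ⟨x.2.1.1, fun i h => x.2.1.2 i (by omega)⟩, rfl⟩⟩
  invFun p :=
    ⟨fun i => if h : i.1 < k + 1 then p.2.1 ⟨i.1, h⟩ else μ,
     ⟨by
        show (if h : (0:ℕ) < k + 1 then p.2.1 ⟨0, h⟩ else μ) = ⊥
        rw [dif_pos (Nat.succ_pos k)]
        exact p.2.2.1.1,
      by
        intro i h
        show Adj (if h' : i < k + 1 then p.2.1 ⟨i, h'⟩ else μ)
          (if h' : i + 1 < k + 1 then p.2.1 ⟨i+1, h'⟩ else μ)
        rcases Nat.lt_or_ge (i+1) (k+1) with h1 | h1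
        · rw [dif_pos h1, dif_pos (Nat.lt_of_succ_lt h1)]
          exact p.2.2.1.2 i h1
        · have hik : i = k := by omega
          rw [dif_pos (show i < k+1 by omega), dif_neg (show ¬ i + 1 < k+1 by omega)]
          have hl : (⟨i, show i < k+1 by omega⟩ : Fin (k+1)) = Fin.last k := by
            apply Fin.ext; simp [Fin.last, hik]
          rw [hl, p.2.2.2]
          exact mem_nbr.mp p.1.2⟩,
     by
      show (if h' : k + 1 < k + 1 then p.2.1 ⟨k+1, h'⟩ else μ) = μ
      rw [dif_neg (by omega)]⟩
  left_inv x := by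
    apply Subtype.ext
    funext i
    show (if h : i.1 < k + 1 then x.1 ⟨i.1, _⟩ else μ) = x.1 i
    by_cases h : i.1 < k + 1
    · rw [dif_pos h]
    · rw [dif_neg h]
      have hi : i = Fin.last (k+1) := by
        apply Fin.ext; simp only [Fin.last]; omega
      rw [hi, x.2.2]
  right_inv p := by
    obtain ⟨⟨ν, hν⟩, g, hgw, hglast⟩ := p
    have hval : (if h : k < k + 1 then g ⟨k, h⟩ else μ) = ν := by
      rw [dif_pos (by omega)]
      exact hglast
    apply Sigma.ext
    · exact Subtype.ext hval
    · apply (Subtype.heq_iff_coe_eq ?_).mpr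
      · funext i
        show (if h : i.1 < k + 1 then g ⟨i.1, h⟩ else μ) = g i
        rw [dif_pos i.2]
      · intro x
        show (WalkProp k x ∧ x (Fin.last k) = (if h : k < k + 1 then g ⟨k, h⟩ else μ)) ↔
          (WalkProp k x ∧ x (Fin.last k) = ν)
        rw [hval]


lemma walkEnd_card : ∀ (k : ℕ) (μ : YoungDiagram), Nat.card (WalkEnd k μ) = vfun k μ := by
  intro k
  induction k with
  | zero => exact walkEnd_zero_card
  | succ k ih =>
    intro μ
    rw [Nat.card_congr (walkEquiv k μ)]
    letI : Fintype {ν // ν ∈ nbr μ} := FinsetCoe.fintype _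
    letI : ∀ ν : {ν // ν ∈ nbr μ}, Fintype (WalkEnd k ν.1) := fun ν => Fintype.ofFinite _
    rw [Nat.card_eq_fintype_card, Fintype.card_sigma]
    have h2 : ∀ ν : {ν // ν ∈ nbr μ}, Fintype.card (WalkEnd k ν.1) = vfun k ν.1 := by
      intro ν
      rw [← Nat.card_eq_fintype_card, ih]
    rw [Finset.sum_congr rfl (fun ν _ => h2 ν)]
    show ∑ ν : {ν // ν ∈ nbr μ}, vfun k ν.1 = Aop (vfun k) μ
    rw [Aop_eq_sum_nbr]
    exact Finset.sum_coe_sort (nbr μ) (vfun k)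


lemma adj_congr {a a2 b b2 : YoungDiagram} (ha : a = a2) (hb : b = b2) (h : Adj a b) :
    Adj a2 b2 := ha ▸ hb ▸ h

lemma adj_bot_box : Adj ⊥ box := Or.inl ⟨bot_le, by rw [box_card, bot_card]⟩

lemma adj_bot_eq_box {x : YoungDiagram} (h : Adj ⊥ x) : x = box := by
  rcases h with ⟨_, hc⟩ | ⟨_, hc⟩
  · rw [bot_card] at hc
    exact card_eq_one hc
  · rw [bot_card] at hc
    omega

noncomputable def glue (n : ℕ) (L G : Fin n → YoungDiagram) (i : ℕ) : YoungDiagram :=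
  if h : 1 ≤ i ∧ i ≤ n then L ⟨i - 1, by omega⟩
  else if h2 : n < i ∧ i ≤ 2*n - 1 then G ⟨2*n - 1 - i, by omega⟩
  else ⊥

lemma glue_lam {n : ℕ} {L G : Fin n → YoungDiagram} {i : ℕ} (h1 : 1 ≤ i) (h2 : i ≤ n) :
    glue n L G i = L ⟨i - 1, by omega⟩ := by
  rw [glue, dif_pos ⟨h1, h2⟩]

lemma glue_gam {n : ℕ} {L G : Fin n → YoungDiagram} {i : ℕ} (h1 : n < i) (h2 : i ≤ 2*n - 1) :
    glue n L G i = G ⟨2*n - 1 - i, by omega⟩ := by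
  rw [glue, dif_neg (by omega), dif_pos ⟨h1, h2⟩]

lemma glue_bot {n : ℕ} {L G : Fin n → YoungDiagram} {i : ℕ} (h : i = 0 ∨ 2*n ≤ i) :
    glue n L G i = ⊥ := by
  rw [glue, dif_neg (by omega), dif_neg (by omega)]

noncomputable def pairEquiv (n : ℕ) (hn : 1 ≤ n) :
    { p : (Fin n → YoungDiagram) × (Fin n → YoungDiagram) //
        IsUpDown p.1 ∧ IsUpDown p.2 ∧
          p.1 ⟨n - 1, Nat.sub_lt hn Nat.one_pos⟩ = p.2 ⟨n - 1, Nat.sub_lt hn Nat.one_pos⟩ } ≃ WalkEnd (2*n) ⊥ where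
  toFun x :=
    ⟨fun i => glue n x.1.1 x.1.2 i.1, by
      obtain ⟨⟨L, G⟩, hL, hG, hend⟩ := x
      have hL1 : ∀ hp, L ⟨0, hp⟩ = box := fun hp => hL.1 hp
      have hG1 : ∀ hp, G ⟨0, hp⟩ = box := fun hp => hG.1 hp
      have hL2 : ∀ i (h : i + 1 < n), Adj (L ⟨i, Nat.lt_of_succ_lt h⟩) (L ⟨i+1, h⟩) :=
        fun i h => hL.2 i h
      have hG2 : ∀ i (h : i + 1 < n), Adj (G ⟨i, Nat.lt_of_succ_lt h⟩) (G ⟨i+1, h⟩) :=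
        fun i h => hG.2 i h
      have hend2 : L ⟨n - 1, Nat.sub_lt hn Nat.one_pos⟩ = G ⟨n - 1, Nat.sub_lt hn Nat.one_pos⟩ := hend
      refine ⟨glue_bot (Or.inl rfl), ?_⟩
      intro i h
      show Adj (glue n L G i) (glue n L G (i+1))
      by_cases h0 : i = 0
      · rw [h0, glue_bot (Or.inl rfl), glue_lam le_rfl hn, hL1 (by omega)]
        exact adj_bot_box
      · by_cases hA : i + 1 ≤ n
        · rw [glue_lam (by omega) (by omega), glue_lam (by omega) hA]
          refine adj_congr (congrArg L (Fin.ext ?_)) (congrArg L (Fin.ext ?_))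
            (hL2 (i-1) (by omega)) <;> simp <;> omega
        · by_cases hM : i = n
          · by_cases hn1 : n = 1
            · rw [glue_lam (by omega) (by omega), glue_bot (Or.inr (by omega)),
                show (⟨i-1, by omega⟩ : Fin n) = ⟨0, by omega⟩ from Fin.ext (by simp <;> omega),
                hL1 (by omega)]
              exact adj_symm adj_bot_box
            · rw [glue_lam (by omega) (by omega), glue_gam (by omega) (by omega)]
              refine adj_congr (a := G ⟨n-1, by omega⟩) (b := G ⟨n-2, by omega⟩)
                ?_ (congrArg G (Fin.ext ?_)) ?_
              · rw [← hend2]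
                exact congrArg L (Fin.ext (by simp <;> omega))
              · simp <;> omega
              · exact adj_symm (adj_congr (congrArg G (Fin.ext (by simp <;> omega)))
                  (congrArg G (Fin.ext (by simp <;> omega))) (hG2 (n-2) (by omega)))
          · by_cases hB : i + 1 ≤ 2*n - 1
            · rw [glue_gam (by omega) (by omega), glue_gam (by omega) hB]
              refine adj_symm (adj_congr (congrArg G (Fin.ext ?_)) (congrArg G (Fin.ext ?_))
                (hG2 (2*n-2-i) (by omega))) <;> simp <;> try omega
            · rw [glue_gam (by omega) (by omega), glue_bot (Or.inr (by omega)),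
                show (⟨2*n-1-i, by omega⟩ : Fin n) = ⟨0, by omega⟩ from Fin.ext (by simp <;> omega),
                hG1 (by omega)]
              exact adj_symm adj_bot_box,
     glue_bot (Or.inr le_rfl)⟩
  invFun g :=
    ⟨⟨fun j => g.1 ⟨j.1 + 1, by omega⟩, fun j => g.1 ⟨2*n - 1 - j.1, by omega⟩⟩, by
      refine ⟨⟨?_, ?_⟩, ⟨?_, ?_⟩, ?_⟩
      · intro h0
        have hadj := g.2.1.2 0 (by omega)
        have hb : g.1 ⟨0, by omega⟩ = ⊥ := g.2.1.1
        rw [hb] at hadj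
        exact adj_bot_eq_box hadj
      · intro j h
        exact g.2.1.2 (j+1) (by omega)
      · intro h0
        have hadj := g.2.1.2 (2*n - 1) (by omega)
        have hb : g.1 ⟨2*n - 1 + 1, by omega⟩ = ⊥ := by
          rw [show (⟨2*n-1+1, by omega⟩ : Fin (2*n+1)) = Fin.last (2*n) from
            Fin.ext (by simp [Fin.last] <;> omega)]
          exact g.2.2
        rw [hb] at hadj
        exact adj_bot_eq_box (adj_symm hadj)
      · intro j h
        refine adj_symm (adj_congr (congrArg g.1 (Fin.ext ?_)) (congrArg g.1 (Fin.ext ?_))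
          (g.2.1.2 (2*n - 2 - j) (by omega))) <;> simp <;> try omega
      · exact congrArg g.1 (Fin.ext (by simp <;> omega))⟩
  left_inv x := by
    obtain ⟨⟨L, G⟩, hL, hG, hend⟩ := x
    have hend2 : L ⟨n - 1, Nat.sub_lt hn Nat.one_pos⟩ = G ⟨n - 1, Nat.sub_lt hn Nat.one_pos⟩ := hend
    apply Subtype.ext
    apply Prod.ext
    · funext j
      show glue n L G (j.1 + 1) = L j
      rw [glue_lam (by omega) (by omega)]
      exact congrArg L (Fin.ext (by simp))
    · funext j
      show glue n L G (2*n - 1 - j.1) = G j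
      by_cases hj : j.1 = n - 1
      · rw [glue_lam (by omega) (by omega),
          show (⟨2*n-1-j.1-1, by omega⟩ : Fin n) = ⟨n-1, by omega⟩ from Fin.ext (by simp <;> omega),
          hend2]
        exact congrArg G (Fin.ext (by simp <;> omega))
      · have hj2 : j.1 < n - 1 := by have := j.2; omega
        rw [glue_gam (by omega) (by omega)]
        exact congrArg G (Fin.ext (by simp <;> omega))
  right_inv g := by
    apply Subtype.ext
    funext i
    show glue n (fun j => g.1 ⟨j.1 + 1, by omega⟩) (fun j => g.1 ⟨2*n - 1 - j.1, by omega⟩) i.1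
      = g.1 i
    by_cases h0 : i.1 = 0
    · rw [glue_bot (Or.inl h0)]
      have hb : g.1 ⟨0, by omega⟩ = ⊥ := g.2.1.1
      rw [show i = ⟨0, by omega⟩ from Fin.ext h0, hb]
    · by_cases hA : i.1 ≤ n
      · rw [glue_lam (by omega) hA]
        exact congrArg g.1 (Fin.ext (by simp <;> omega))
      · by_cases hB : i.1 ≤ 2*n - 1
        · rw [glue_gam (by omega) hB]
          exact congrArg g.1 (Fin.ext (by simp <;> omega))
        · have hi : i.1 = 2*n := by have := i.2; omega
          rw [glue_bot (Or.inr (by omega)),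
            show i = Fin.last (2*n) from Fin.ext (by simp [Fin.last] <;> omega), g.2.2]

end UD

/-- For `n ≥ 1`, the number of pairs `(Λ, Γ)` of up-and-down tableaux of length
`n` with `Λ_n = Γ_n` equals the double factorial `(2n − 1)!! = 1·3·5⋯(2n−1)`. -/
theorem card_pairs_upDown (n : ℕ) (hn : 1 ≤ n) :
    Nat.card { p : (Fin n → YoungDiagram) × (Fin n → YoungDiagram) //
        IsUpDown p.1 ∧ IsUpDown p.2 ∧
          p.1 ⟨n - 1, by omega⟩ = p.2 ⟨n - 1, by omega⟩ } =
      ∏ i ∈ Finset.range n, (2 * i + 1) := by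
  rw [Nat.card_congr (UD.pairEquiv n hn), UD.walkEnd_card, UD.vfun_even_bot]
end
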